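/- Let n ∈ ℕ, a ∈ C¹([0,1]) with a > 0, and f ∈ C¹([0,∞)) satisfy (f_eq) and (f_sgn). Then there exists d* > u0 such that the angular variable of the solution u_{d*} satisfies θ_{d*}(1) − θ_{d*}(0) < π. -/

import Mathlib

open Set MeasureTheory Filter Topology

noncomputable section

/-- `φ(s) = s / √(1+s²)`. -/
def phi (s : ℝ) : ℝ := s / Real.sqrt (1 + s ^ 2)

/-- `φ'(s) = (1+s²)^(-3/2)`. -/
def phiD (s : ℝ) : ℝ := 1 / (Real.sqrt (1 + s ^ 2)) ^ 3

/-- the inverse of `φ`, a bijection of `(-1,1)` onto `ℝ`. -/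
def phiInv (y : ℝ) : ℝ := y / Real.sqrt (1 - y ^ 2)

/-- the approximation `φₙ`: equal to `φ` on `[-n,n]`, affine outside. -/
def phiN (n : ℕ) (s : ℝ) : ℝ :=
  if (n : ℝ) < s then phi n + phiD n * (s - n)
  else if s < -(n : ℝ) then -phi n + phiD n * (s + n)
  else phi s

/-- `Φ(s) = √(1+s²) - 1`. -/
def PhiBig (s : ℝ) : ℝ := Real.sqrt (1 + s ^ 2) - 1

/-- `Φₙ(s) = ∫₀ˢ φₙ`. -/
def PhiNBig (n : ℕ) (s : ℝ) : ℝ := ∫ t in (0:ℝ)..s, phiN n t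

/-- the extension `f̂` of `f` vanishing on the negatives. -/
def fhat (f : ℝ → ℝ) (s : ℝ) : ℝ := if s < 0 then 0 else f s

/-- `F(s) = ∫_{u0}^s f`. -/
def Fprim (f : ℝ → ℝ) (u0 s : ℝ) : ℝ := ∫ t in u0..s, f t

/-- assumption `(f_eq)`. -/
def Feq (f : ℝ → ℝ) (u0 : ℝ) : Prop := f 0 = 0 ∧ f u0 = 0

/-- assumption `(f_sgn)`. -/
def Fsgn (f : ℝ → ℝ) (u0 : ℝ) : Prop :=
  (∀ s, 0 < s → s < u0 → f s < 0) ∧ (∀ s, u0 < s → 0 < f s)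

/-- the constant `C_a`. -/
def Ca (a : ℝ → ℝ) : ℝ :=
  max ((a 1 / a 0) * Real.exp (∫ x in (0:ℝ)..1, max (-deriv a x) 0 / a x))
      ((a 0 / a 1) * Real.exp (∫ x in (0:ℝ)..1, max (deriv a x) 0 / a x))

/-- assumption `(f_ap)`, with the value `ū` made explicit. -/
def Fap (a f : ℝ → ℝ) (u0 ubar : ℝ) : Prop :=
  u0 < ubar ∧ (∫ s in u0..ubar, f s) = Ca a * ∫ s in u0..(0:ℝ), f s

/-- assumption `(f_ap)'`. -/
def Fap' (a f : ℝ → ℝ) : Prop :=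
  (∫ x in (0:ℝ)..1, a x) * sSup ((fun s => max (-f s) 0) '' Ici 0) < 1

/-- classical solution of the approximated Neumann problem `(Pₙ)`. -/
def IsPnSol (a f : ℝ → ℝ) (n : ℕ) (u : ℝ → ℝ) : Prop :=
  ContDiff ℝ 2 u ∧ (∀ x ∈ Ioo (0:ℝ) 1, 0 < u x) ∧
  deriv u 0 = 0 ∧ deriv u 1 = 0 ∧
  ∀ x ∈ Ioo (0:ℝ) 1, -deriv (fun y => phiN n (deriv u y)) x = a x * f (u x)

/-- classical solution of the prescribed mean curvature Neumann problem `(P)`. -/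
def IsPSol (a f : ℝ → ℝ) (u : ℝ → ℝ) : Prop :=
  ContDiff ℝ 2 u ∧ (∀ x ∈ Ioo (0:ℝ) 1, 0 < u x) ∧
  deriv u 0 = 0 ∧ deriv u 1 = 0 ∧
  ∀ x ∈ Ioo (0:ℝ) 1, -deriv (fun y => phi (deriv u y)) x = a x * f (u x)

/-- solution of the Cauchy problem with initial datum `d`. -/
def IsCauchySol (a f : ℝ → ℝ) (n : ℕ) (d : ℝ) (u : ℝ → ℝ) : Prop :=
  ContDiff ℝ 2 u ∧ u 0 = d ∧ deriv u 0 = 0 ∧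
  ∀ x ∈ Ioo (0:ℝ) 1, -deriv (fun y => phiN n (deriv u y)) x = a x * fhat f (u x)

/-- `θ` is a (clockwise) angular variable for `(u - u0, φₙ(u'))` around `(u0,0)`. -/
def IsAngle (n : ℕ) (u0 : ℝ) (u θ : ℝ → ℝ) : Prop :=
  ContinuousOn θ (Icc 0 1) ∧
  ∀ x ∈ Icc (0:ℝ) 1,
    u x - u0 = Real.sqrt ((u x - u0) ^ 2 + phiN n (deriv u x) ^ 2) * Real.cos (θ x) ∧
    phiN n (deriv u x) = -(Real.sqrt ((u x - u0) ^ 2 + phiN n (deriv u x) ^ 2) * Real.sin (θ x))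

/-- non-constant on `(0,1)`. -/
def Nonconstant (u : ℝ → ℝ) : Prop := ∃ x ∈ Ioo (0:ℝ) 1, ∃ y ∈ Ioo (0:ℝ) 1, u x ≠ u y

/-- the set of points of `(0,1)` where `u` takes the value `u0`. -/
def zeroSet (u : ℝ → ℝ) (u0 : ℝ) : Set ℝ := {x | x ∈ Ioo (0:ℝ) 1 ∧ u x = u0}

/-- the hypothesis `f'(u0) > λ_{k+1}`: there is `λ̄ < f'(u0)` admitting a nontrivial Neumann
eigenfunction of `-w'' = λ̄ a w` with exactly `k` zeros in `(0,1)`. -/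
def EigenHyp (a f : ℝ → ℝ) (u0 : ℝ) (k : ℕ) : Prop :=
  ∃ lam : ℝ, ∃ w : ℝ → ℝ, lam < deriv f u0 ∧ ContDiff ℝ 2 w ∧
    (∃ x ∈ Icc (0:ℝ) 1, w x ≠ 0) ∧
    (∀ x ∈ Ioo (0:ℝ) 1, -deriv (deriv w) x = lam * a x * w x) ∧
    deriv w 0 = 0 ∧ deriv w 1 = 0 ∧ (zeroSet w 0).ncard = k

/-- the functional `J(v) = ∫₀¹ √(1+|Dv|²)`. -/
def Jfun (v : ℝ → ℝ) : ℝ :=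
  sSup { r : ℝ | ∃ w₁ w₂ : ℝ → ℝ, ContDiff ℝ 1 w₁ ∧ ContDiff ℝ 1 w₂ ∧
    tsupport w₁ ⊆ Ioo 0 1 ∧ tsupport w₂ ⊆ Ioo 0 1 ∧
    (∀ x, w₁ x ^ 2 + w₂ x ^ 2 ≤ 1) ∧
    r = ∫ x in Ioo (0:ℝ) 1, (v x * deriv w₁ x + w₂ x) }

/-- BV-solution of the Neumann problem `(P)`. -/
def IsBVSol (a f : ℝ → ℝ) (u : ℝ → ℝ) : Prop :=
  BoundedVariationOn u (Ioo 0 1) ∧ (∀ x ∈ Ioo (0:ℝ) 1, 0 ≤ u x) ∧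
  ∀ v : ℝ → ℝ, BoundedVariationOn v (Ioo 0 1) →
    Jfun u + ∫ x in Ioo (0:ℝ) 1, a x * f (u x) * (v x - u x) ≤ Jfun v

/-- `u - u0` changes sign at `z`. -/
def ChangesSign (u : ℝ → ℝ) (u0 z : ℝ) : Prop :=
  ∃ δ > (0:ℝ), ((∀ x ∈ Ioo (z - δ) z, u x < u0) ∧ (∀ x ∈ Ioo z (z + δ), u0 < u x)) ∨
           ((∀ x ∈ Ioo (z - δ) z, u0 < u x) ∧ (∀ x ∈ Ioo z (z + δ), u x < u0))

/-- the energy `Eₙ` along a solution of `(Pₙ)`. -/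
def EnergyN (a f : ℝ → ℝ) (u0 : ℝ) (n : ℕ) (u : ℝ → ℝ) (x : ℝ) : ℝ :=
  deriv u x * phiN n (deriv u x) - PhiNBig n (deriv u x) + a x * Fprim f u0 (u x)

/-- the energy `ℰ` of `u` extends to a continuous function on `[0,1]`. -/
def HasContinuousEnergy (a f : ℝ → ℝ) (u0 : ℝ) (u : ℝ → ℝ) : Prop :=
  ∃ E : ℝ → ℝ, ContinuousOn E (Icc 0 1) ∧
    ∀ x ∈ Ioo (0:ℝ) 1, ContinuousAt u x →
      (DifferentiableAt ℝ u x →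
        E x = 1 - 1 / Real.sqrt (1 + deriv u x ^ 2) + a x * Fprim f u0 (u x)) ∧
      (¬ DifferentiableAt ℝ u x → E x = 1 + a x * Fprim f u0 (u x))

/-- the oscillatory structure of the BV-solutions of Theorem 1.1: `m` generalized
intersections with `u0`, with starting sign `σ` (`σ = 1` for case (I), `σ = -1` for case (II)). -/
def OscStructure (u0 : ℝ) (u : ℝ → ℝ) (m : ℕ) (σ : ℝ) : Prop :=
  ∃ x : ℕ → ℝ,
    x 0 = 0 ∧ x (m + 1) = 1 ∧ (∀ i ≤ m, x i < x (i + 1)) ∧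
    ContDiffOn ℝ 2 u (Ico 0 (x 1)) ∧ ContDiffOn ℝ 2 u (Ioc (x m) 1) ∧
    (∀ i, 1 ≤ i → i + 1 ≤ m → ContDiffOn ℝ 2 u (Ioo (x i) (x (i + 1)))) ∧
    derivWithin u (Icc 0 1) 0 = 0 ∧ derivWithin u (Icc 0 1) 1 = 0 ∧
    (∀ i ≤ m, ∀ y ∈ Ioo (x i) (x (i + 1)), 0 < σ * (-1 : ℝ) ^ (i + 1) * (u y - u0)) ∧
    ∀ i, 1 ≤ i → i ≤ m →
      (u (x i) = u0 ∧ ContDiffOn ℝ 2 u (Ioo (x (i - 1)) (x (i + 1)))) ∨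
      (∃ L R : ℝ, Tendsto u (𝓝[<] x i) (𝓝 L) ∧ Tendsto u (𝓝[>] x i) (𝓝 R) ∧
        (0 < σ * (-1 : ℝ) ^ (i + 1) →
          L ≤ u0 ∧ u0 ≤ R ∧ Tendsto (deriv u) (𝓝[<] x i) atTop ∧
            Tendsto (deriv u) (𝓝[>] x i) atTop) ∧
        (σ * (-1 : ℝ) ^ (i + 1) < 0 →
          R ≤ u0 ∧ u0 ≤ L ∧ Tendsto (deriv u) (𝓝[<] x i) atBot ∧
            Tendsto (deriv u) (𝓝[>] x i) atBot))

section AuxStatement7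

lemma sqrt_one_add_sq_pos (s : ℝ) : 0 < Real.sqrt (1 + s ^ 2) :=
  Real.sqrt_pos.mpr (by positivity)

lemma phiD_pos (s : ℝ) : 0 < phiD s := by
  have := sqrt_one_add_sq_pos s
  unfold phiD; positivity

lemma phiD_neg (s : ℝ) : phiD (-s) = phiD s := by
  unfold phiD
  have h : 1 + (-s) ^ 2 = 1 + s ^ 2 := by ring
  rw [h]

lemma phi_neg (s : ℝ) : phi (-s) = -phi s := by
  unfold phi
  have h : 1 + (-s) ^ 2 = 1 + s ^ 2 := by ring
  rw [h, neg_div]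

lemma phi_nonneg {s : ℝ} (h : 0 ≤ s) : 0 ≤ phi s :=
  div_nonneg h (Real.sqrt_nonneg _)

lemma phi_hasDerivAt (s : ℝ) : HasDerivAt phi (phiD s) s := by
  have h0 : (0:ℝ) < 1 + s ^ 2 := by positivity
  have hsp := sqrt_one_add_sq_pos s
  have hs0 : Real.sqrt (1 + s ^ 2) ≠ 0 := hsp.ne'
  have hsq : HasDerivAt (fun t : ℝ => 1 + t ^ 2) (2 * s) s := by
    simpa using ((hasDerivAt_pow 2 s).const_add 1)
  have hsqrt : HasDerivAt (fun t : ℝ => Real.sqrt (1 + t ^ 2))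
      (1 / (2 * Real.sqrt (1 + s ^ 2)) * (2 * s)) s :=
    (Real.hasDerivAt_sqrt h0.ne').comp s hsq
  have hdiv := (hasDerivAt_id s).div hsqrt hs0
  have hfn : (id / fun t : ℝ => Real.sqrt (1 + t ^ 2)) = phi := rfl
  rw [hfn] at hdiv
  refine hdiv.congr_deriv ?_
  symm
  have hg : Real.sqrt (1 + s ^ 2) ^ 2 = 1 + s ^ 2 := Real.sq_sqrt h0.le
  unfold phiD
  simp only [id_eq]
  field_simp
  linear_combination (-1:ℝ) * hg

lemma phiN_eq_pos (n : ℕ) {s : ℝ} (h : (n:ℝ) < s) :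
    phiN n s = phi n + phiD n * (s - n) := by
  unfold phiN; rw [if_pos h]

lemma phiN_eq_neg (n : ℕ) {s : ℝ} (h : s < -(n:ℝ)) :
    phiN n s = -phi n + phiD n * (s + n) := by
  have h0 : (0:ℝ) ≤ (n:ℝ) := n.cast_nonneg
  have h1 : ¬ ((n:ℝ) < s) := by push_neg; linarith
  unfold phiN; rw [if_neg h1, if_pos h]

lemma phiN_eq_mid (n : ℕ) {s : ℝ} (h1 : -(n:ℝ) ≤ s) (h2 : s ≤ (n:ℝ)) :
    phiN n s = phi s := by
  unfold phiN; rw [if_neg (not_lt.mpr h2), if_neg (not_lt.mpr h1)]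

def phiND (n : ℕ) (s : ℝ) : ℝ :=
  if -(n:ℝ) ≤ s ∧ s ≤ (n:ℝ) then phiD s else phiD (n:ℝ)

lemma phiND_pos (n : ℕ) (s : ℝ) : 0 < phiND n s := by
  unfold phiND; split_ifs <;> exact phiD_pos _

lemma affine_hasDerivAt (C m b s : ℝ) : HasDerivAt (fun t => C + m * (t - b)) m s := by
  simpa using (((hasDerivAt_id s).sub_const b).const_mul m).const_add C

lemma phiN_zero_eq (t : ℝ) : phiN 0 t = t := by
  unfold phiN
  norm_num
  split_ifs with ha hb
  · unfold phi phiD; norm_num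
  · unfold phi phiD; norm_num
  · have ht : t = 0 := le_antisymm (not_lt.mp ha) (not_lt.mp hb)
    subst ht; unfold phi; norm_num

lemma phiN_hasDerivAt (n : ℕ) (s : ℝ) : HasDerivAt (phiN n) (phiND n s) s := by
  by_cases hn : n = 0
  · subst hn
    have hD : phiND 0 s = 1 := by
      unfold phiND
      split_ifs with h
      · have hs : s = 0 := le_antisymm (by simpa using h.2) (by simpa using h.1)
        subst hs; unfold phiD; norm_num
      · unfold phiD; norm_num
    have hfn : phiN 0 = fun t => t := funext phiN_zero_eq
    rw [hD, hfn]
    exact hasDerivAt_id' s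
  have hn1 : (1:ℝ) ≤ (n:ℝ) := by exact_mod_cast Nat.one_le_iff_ne_zero.mpr hn
  have hnn : -(n:ℝ) < (n:ℝ) := by linarith
  rcases lt_trichotomy s (-(n:ℝ)) with h | h | h
  · have hD : phiND n s = phiD n := by
      unfold phiND; rw [if_neg]; rintro ⟨h', _⟩; linarith
    rw [hD]
    refine (affine_hasDerivAt (-phi n) (phiD n) (-(n:ℝ)) s).congr_of_eventuallyEq ?_
    filter_upwards [Iio_mem_nhds h] with t ht
    rw [phiN_eq_neg n ht]; ring
  · subst h
    have hD : phiND n (-(n:ℝ)) = phiD (n:ℝ) := by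
      unfold phiND; rw [if_pos ⟨le_refl _, by linarith⟩, phiD_neg]
    rw [hD]
    have hpt : phiN n (-(n:ℝ)) = -phi n + phiD ↑n * (-(n:ℝ) - -(n:ℝ)) := by
      rw [phiN_eq_mid n le_rfl (by linarith), phi_neg]; ring
    have hleft : HasDerivWithinAt (phiN n) (phiD n) (Iic (-(n:ℝ))) (-(n:ℝ)) := by
      refine ((affine_hasDerivAt (-phi n) (phiD n) (-(n:ℝ)) _).hasDerivWithinAt).congr ?_ hpt
      intro t ht
      rcases lt_or_eq_of_le (mem_Iic.mp ht) with hlt | heq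
      · rw [phiN_eq_neg n hlt]; ring
      · rw [heq]; exact hpt
    have hright : HasDerivWithinAt (phiN n) (phiD n) (Ici (-(n:ℝ))) (-(n:ℝ)) := by
      have hphi := (phi_hasDerivAt (-(n:ℝ))).hasDerivWithinAt (s := Ici (-(n:ℝ)))
      rw [phiD_neg] at hphi
      refine hphi.congr_of_eventuallyEq ?_ (phiN_eq_mid n le_rfl (by linarith))
      filter_upwards [Ico_mem_nhdsGE_of_mem (⟨le_rfl, hnn⟩ : -(n:ℝ) ∈ Ico (-(n:ℝ)) (n:ℝ))] with t ht
      exact phiN_eq_mid n ht.1 ht.2.le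
    have hu := hleft.union hright
    rw [Iic_union_Ici] at hu
    exact hasDerivWithinAt_univ.mp hu
  · rcases lt_trichotomy s ((n:ℝ)) with h2 | h2 | h2
    · have hD : phiND n s = phiD s := by unfold phiND; rw [if_pos ⟨h.le, h2.le⟩]
      rw [hD]
      refine (phi_hasDerivAt s).congr_of_eventuallyEq ?_
      filter_upwards [Ioo_mem_nhds h h2] with t ht
      exact phiN_eq_mid n ht.1.le ht.2.le
    · subst h2
      have hD : phiND n ((n:ℝ)) = phiD (n:ℝ) := by
        unfold phiND; rw [if_pos ⟨by linarith, le_rfl⟩]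
      rw [hD]
      have hpt : phiN n ((n:ℝ)) = phi n + phiD ↑n * ((n:ℝ) - (n:ℝ)) := by
        rw [phiN_eq_mid n (by linarith) le_rfl]; ring
      have hleft : HasDerivWithinAt (phiN n) (phiD n) (Iic ((n:ℝ))) ((n:ℝ)) := by
        refine ((phi_hasDerivAt ((n:ℝ))).hasDerivWithinAt).congr_of_eventuallyEq ?_
          (phiN_eq_mid n (by linarith) le_rfl)
        filter_upwards [Ioc_mem_nhdsLE_of_mem (⟨hnn, le_rfl⟩ : (n:ℝ) ∈ Ioc (-(n:ℝ)) (n:ℝ))] with t ht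
        exact phiN_eq_mid n ht.1.le ht.2
      have hright : HasDerivWithinAt (phiN n) (phiD n) (Ici ((n:ℝ))) ((n:ℝ)) := by
        refine ((affine_hasDerivAt (phi n) (phiD n) ((n:ℝ)) _).hasDerivWithinAt).congr ?_ hpt
        intro t ht
        rcases lt_or_eq_of_le (mem_Ici.mp ht) with hlt | heq
        · rw [phiN_eq_pos n hlt]
        · rw [← heq]; exact hpt
      have hu := hleft.union hright
      rw [Iic_union_Ici] at hu
      exact hasDerivWithinAt_univ.mp hu
    · have hD : phiND n s = phiD n := by
        unfold phiND; rw [if_neg]; rintro ⟨_, h'⟩; linarith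
      rw [hD]
      refine (affine_hasDerivAt (phi n) (phiD n) ((n:ℝ)) s).congr_of_eventuallyEq ?_
      filter_upwards [Ioi_mem_nhds h2] with t ht
      rw [phiN_eq_pos n ht]

lemma phiN_strictMono (n : ℕ) : StrictMono (phiN n) :=
  strictMono_of_deriv_pos fun s => by
    rw [(phiN_hasDerivAt n s).deriv]; exact phiND_pos n s

lemma phiN_diff (n : ℕ) : Differentiable ℝ (phiN n) :=
  fun s => (phiN_hasDerivAt n s).differentiableAt

end AuxStatement7

theorem statement7 (n : ℕ) (a f : ℝ → ℝ) (u0 : ℝ)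
    (ha : ContDiff ℝ 1 a) (hapos : ∀ x ∈ Icc (0:ℝ) 1, 0 < a x)
    (hf : ContDiffOn ℝ 1 f (Ici 0)) (hu0 : 0 < u0)
    (hfeq : Feq f u0) (hfsgn : Fsgn f u0) :
    ∃ d : ℝ, u0 < d ∧ ∀ u θ : ℝ → ℝ, IsCauchySol a f n d u → IsAngle n u0 u θ →
      θ 0 = 0 → θ 1 - θ 0 < Real.pi := by
  -- the maximum A of a on [0,1]
  obtain ⟨xA, hxA, hA'⟩ := isCompact_Icc.exists_isMaxOn (α := ℝ) (nonempty_Icc.mpr zero_le_one)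
    ha.continuous.continuousOn
  have hA : ∀ y ∈ Icc (0:ℝ) 1, a y ≤ a xA := isMaxOn_iff.mp hA' 
  set A := a xA with hAdef
  have hApos : 0 < A := hapos xA hxA
  -- the maximum M of -f on [0,u0]
  have hfc : ContinuousOn (fun s => -f s) (Icc 0 u0) :=
    ((hf.continuousOn).mono Icc_subset_Ici_self).neg
  obtain ⟨sM, hsM, hM'⟩ := isCompact_Icc.exists_isMaxOn (α := ℝ) (nonempty_Icc.mpr hu0.le) hfc
  have hM : ∀ y ∈ Icc (0:ℝ) u0, -f y ≤ -f sM := isMaxOn_iff.mp hM' 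
  set M := -f sM with hMdef
  have hMpos : 0 < M := by
    have h1 : f (u0/2) < 0 := hfsgn.1 (u0/2) (by linarith) (by linarith)
    have h2 := hM (u0/2) ⟨by linarith, by linarith⟩
    linarith
  have hMglob : ∀ s : ℝ, -(fhat f s) ≤ M := by
    intro s
    unfold fhat
    split_ifs with h
    · simpa using hMpos.le
    · by_cases h2 : s ≤ u0
      · exact hM s ⟨not_lt.mp h, h2⟩
      · have := hfsgn.2 s (not_le.mp h2)
        linarith
  have hphiDn : 0 < phiD (n:ℝ) := phiD_pos _
  set K : ℝ := (n:ℝ) + 2*A*M/phiD (n:ℝ) with hKdef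
  have hKpos : (n:ℝ) < K := by
    have h : 0 < 2*A*M/phiD (n:ℝ) := by positivity
    rw [hKdef]; linarith
  have hK1pos : 0 < K + 1 := by
    have : (0:ℝ) ≤ (n:ℝ) := n.cast_nonneg; linarith
  refine ⟨u0 + (K + 1), by linarith, ?_⟩
  intro u θ hu hθ hθ0
  by_contra hcon
  push_neg at hcon
  -- find x₀ with θ x₀ = π
  have hπmem : Real.pi ∈ Icc (θ 0) (θ 1) :=
    ⟨by rw [hθ0]; exact Real.pi_pos.le, by linarith⟩
  obtain ⟨x₀, hx₀mem, hθx₀⟩ := intermediate_value_Icc zero_le_one hθ.1 hπmem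
  obtain ⟨h1, h2⟩ := hθ.2 x₀ hx₀mem
  rw [hθx₀] at h1 h2
  rw [Real.cos_pi] at h1
  rw [Real.sin_pi] at h2
  set v : ℝ → ℝ := fun y => phiN n (deriv u y) with hvdef
  have hvfun : ∀ y, v y = phiN n (deriv u y) := fun y => by rw [hvdef]
  have hvx₀ : v x₀ = 0 := by simpa using h2
  have hux₀ : u x₀ ≤ u0 := by
    nlinarith [Real.sqrt_nonneg ((u x₀ - u0) ^ 2 + phiN n (deriv u x₀) ^ 2)]
  -- basic regularity
  have hu2 : ContDiff ℝ 2 u := hu.1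
  have hucont : Continuous u := hu2.continuous
  have hu'diff : Differentiable ℝ (deriv u) := by
    have h22 : ContDiff ℝ ((1:ℕ∞) + 1) u := by
      convert hu2 using 2
      norm_num
    exact ((contDiff_succ_iff_deriv.mp h22).2.2).differentiable (by simp)
  have hvdiff : Differentiable ℝ v :=
    fun x => ((phiN_hasDerivAt n (deriv u x)).differentiableAt).comp x (hu'diff x)
  have hode : ∀ x ∈ Ioo (0:ℝ) 1, deriv v x = -(a x * fhat f (u x)) := by
    intro x hx
    have := hu.2.2.2 x hx
    rw [hvdef]
    linarith
  -- the first crossing point c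
  set S : Set ℝ := Icc (0:ℝ) 1 ∩ {x | u x ≤ u0} with hSdef
  have hSx₀ : x₀ ∈ S := ⟨hx₀mem, hux₀⟩
  have hSclosed : IsClosed S := isClosed_Icc.inter (isClosed_le hucont continuous_const)
  have hSbdd : BddBelow S := ⟨0, fun x hx => hx.1.1⟩
  set c := sInf S with hcdef
  have hcS : c ∈ S := hSclosed.csInf_mem ⟨x₀, hSx₀⟩ hSbdd
  have hcu : u c ≤ u0 := hcS.2
  have hc0 : 0 ≤ c := hcS.1.1
  have hc1 : c ≤ 1 := hcS.1.2
  have hd0 : u 0 = u0 + (K + 1) := hu.2.1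
  have hcpos : 0 < c := by
    rcases hc0.lt_or_eq with h | h
    · exact h
    · exfalso; rw [← h, hd0] at hcu; linarith
  have hlt : ∀ x ∈ Icc (0:ℝ) 1, x < c → u0 < u x := by
    intro x hx hxc
    by_contra hcontra
    exact absurd (csInf_le hSbdd ⟨hx, not_lt.mp hcontra⟩) (not_le.mpr hxc)
  have hcx₀ : c ≤ x₀ := csInf_le hSbdd hSx₀
  clear_value A M K v S c
  -- mean value theorem on [0,c]
  obtain ⟨ξ, hξ, hξd⟩ := exists_deriv_eq_slope u hcpos hucont.continuousOn
    (hu2.differentiable (by norm_num)).differentiableOn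
  have hslope : deriv u ξ ≤ -(K+1) := by
    rw [hξd, hd0]
    have hc0' : c - 0 = c := by ring
    rw [hc0', div_le_iff₀ hcpos]
    nlinarith
  have hvξ : v ξ ≤ -(2*A*M) := by
    have hmono : v ξ ≤ phiN n (-(K+1)) := by
      rw [hvfun ξ]; exact (phiN_strictMono n).monotone hslope
    have heq : phiN n (-(K+1)) = -phi n + phiD n * (-(K+1) + n) :=
      phiN_eq_neg n (by linarith)
    have hprod : phiD (n:ℝ) * (K - n) = 2*A*M := by
      rw [hKdef]; field_simp; ring
    have hphin : 0 ≤ phi (n:ℝ) := phi_nonneg n.cast_nonneg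
    nlinarith [hmono, heq, hprod, hphin, hphiDn]
  -- v is antitone on [0,c]
  have hanti1 : AntitoneOn v (Icc 0 c) := by
    apply antitoneOn_of_deriv_nonpos (convex_Icc 0 c) hvdiff.continuous.continuousOn
      hvdiff.differentiableOn
    intro x hx
    rw [interior_Icc] at hx
    have hx01 : x ∈ Ioo (0:ℝ) 1 := ⟨hx.1, lt_of_lt_of_le hx.2 hc1⟩
    rw [hode x hx01]
    have hux : u0 < u x := hlt x ⟨hx.1.le, hx01.2.le⟩ hx.2
    have hfx : fhat f (u x) = f (u x) := if_neg (not_lt.mpr (by linarith))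
    rw [hfx]
    have hfpos := hfsgn.2 (u x) hux
    have hax := hapos x ⟨hx.1.le, hx01.2.le⟩
    have : 0 ≤ a x * f (u x) := mul_nonneg hax.le hfpos.le
    linarith
  have hvc : v c ≤ -(2*A*M) :=
    le_trans (hanti1 ⟨hξ.1.le, hξ.2.le⟩ ⟨hc0, le_rfl⟩ hξ.2.le) hvξ
  -- v x - A*M*x is antitone on [c,1]
  have hgdiff : Differentiable ℝ (fun x => v x - A*M*x) := by
    apply hvdiff.sub
    exact (differentiable_id.const_mul (A*M))
  have hanti2 : AntitoneOn (fun x => v x - A*M*x) (Icc c 1) := by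
    apply antitoneOn_of_deriv_nonpos (convex_Icc c 1) hgdiff.continuous.continuousOn
      hgdiff.differentiableOn
    intro x hx
    rw [interior_Icc] at hx
    have hx01 : x ∈ Ioo (0:ℝ) 1 := ⟨lt_of_le_of_lt hc0 hx.1, hx.2⟩
    have hlin : HasDerivAt (fun y : ℝ => A*M*y) (A*M) x := by
      simpa using (hasDerivAt_id x).const_mul (A*M)
    have hdg : deriv (fun x => v x - A*M*x) x = deriv v x - A*M :=
      (((hvdiff x).hasDerivAt).sub hlin).deriv
    rw [hdg, hode x hx01]
    have hMg := hMglob (u x)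
    have haxA : a x ≤ A := hA x ⟨le_of_lt (lt_of_le_of_lt hc0 hx.1), hx.2.le⟩
    have hax := hapos x ⟨le_of_lt (lt_of_le_of_lt hc0 hx.1), hx.2.le⟩
    have h1 : a x * -(fhat f (u x)) ≤ a x * M := mul_le_mul_of_nonneg_left hMg hax.le
    have h2 : -(a x * fhat f (u x)) = a x * -(fhat f (u x)) := by ring
    have h3 : a x * M ≤ A * M := mul_le_mul_of_nonneg_right haxA hMpos.le
    linarith [h1, h2, h3]
  -- conclusion
  have hfinal := hanti2 ⟨le_rfl, hc1⟩ ⟨hcx₀, hx₀mem.2⟩ hcx₀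
  simp only at hfinal
  have hAM : 0 < A*M := mul_pos hApos hMpos
  have h4 : A*M*x₀ ≤ A*M*1 := mul_le_mul_of_nonneg_left hx₀mem.2 hAM.le
  have h5 : 0 ≤ A*M*c := mul_nonneg hAM.le hc0
  linarith [hfinal, hvx₀, hvc, h4, h5]
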